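/- For N ≥ 2 Hermitian observables A_1, ..., A_N, a density matrix ρ, and α, β > 0: ∑_{i=1}^N Δ²_ρ(A_i) ≥ (1/(αN + (N−2)β)) · [ β·∑_{1≤i<j≤N} Δ²_ρ(A_i + A_j) + (2α/(N(N−1)))·(∑_{1≤i<j≤N} Δ_ρ(A_i − A_j))² + (α−β)·Δ²_ρ(∑_{i=1}^N A_i) ] (bound Y of Theorem 2). -/

import Mathlib

open Finset ComplexOrder
open scoped Matrix

/-- Variance of an observable `M` in the state `ρ`. -/
noncomputable def qvar {d : ℕ} (ρ M : Matrix (Fin d) (Fin d) ℂ) : ℝ :=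
  ((ρ * M ^ 2).trace - (ρ * M).trace ^ 2).re

/-- Standard deviation of an observable `M` in the state `ρ`. -/
noncomputable def qdev {d : ℕ} (ρ M : Matrix (Fin d) (Fin d) ℂ) : ℝ :=
  Real.sqrt (qvar ρ M)

noncomputable def cb {d : ℕ} (ρ X Y : Matrix (Fin d) (Fin d) ℂ) : ℂ :=
  (ρ * (X * Y)).trace - (ρ * X).trace * (ρ * Y).trace

lemma cb_add_add {d : ℕ} (ρ X Y : Matrix (Fin d) (Fin d) ℂ) :
    cb ρ (X + Y) (X + Y) = cb ρ X X + cb ρ X Y + cb ρ Y X + cb ρ Y Y := by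
  simp only [cb, Matrix.mul_add, Matrix.add_mul, Matrix.trace_add]
  ring

lemma cb_sub_sub {d : ℕ} (ρ X Y : Matrix (Fin d) (Fin d) ℂ) :
    cb ρ (X - Y) (X - Y) = cb ρ X X - cb ρ X Y - cb ρ Y X + cb ρ Y Y := by
  simp only [cb, Matrix.mul_sub, Matrix.sub_mul, Matrix.trace_sub]
  ring

lemma cb_sum_sum {d N : ℕ} (ρ : Matrix (Fin d) (Fin d) ℂ) (A : Fin N → Matrix (Fin d) (Fin d) ℂ) :
    cb ρ (∑ i, A i) (∑ i, A i) = ∑ i, ∑ j, cb ρ (A i) (A j) := by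
  simp only [cb, Finset.sum_mul_sum, Matrix.mul_sum, Matrix.trace_sum, Finset.sum_sub_distrib]

lemma qvar_eq_cb {d : ℕ} (ρ M : Matrix (Fin d) (Fin d) ℂ) : qvar ρ M = (cb ρ M M).re := by
  simp [qvar, cb, sq]

lemma sum_pairs {N : ℕ} (g : Fin N → Fin N → ℂ) :
    ∑ i, ∑ j ∈ univ.filter (fun j => i < j), (g i j + g j i)
      = (∑ i, ∑ j, g i j) - ∑ i, g i i := by
  have swap : (∑ i, ∑ j ∈ univ.filter (fun j => j < i), g i j)
      = ∑ i, ∑ j ∈ univ.filter (fun j => i < j), g j i := by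
    refine Finset.sum_comm' ?_
    intro x y; simp [and_comm]
  have split : ∀ i : Fin N, (∑ j, g i j)
      = (∑ j ∈ univ.filter (fun j => i < j), g i j)
        + (g i i + ∑ j ∈ univ.filter (fun j => j < i), g i j) := by
    intro i
    rw [← Finset.sum_filter_add_sum_filter_not univ (fun j => i < j) (g i)]
    congr 1
    have h1 : univ.filter (fun j => ¬ i < j) = insert i (univ.filter (fun j => j < i)) := by
      ext j
      simp only [Finset.mem_filter, Finset.mem_univ, true_and, Finset.mem_insert, not_lt]
      constructor
      · intro h; rcases lt_or_eq_of_le h with h | h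
        · exact Or.inr h
        · exact Or.inl h
      · rintro (rfl | h); · exact le_refl _
        · exact h.le
    have h2 : i ∉ univ.filter (fun j => j < i) := by
      simp only [Finset.mem_filter, Finset.mem_univ, true_and, lt_self_iff_false, not_false_iff]
    rw [h1, Finset.sum_insert h2]
  have e1 : (∑ i, ∑ j ∈ univ.filter (fun j => i < j), (g i j + g j i))
      = (∑ i, ∑ j ∈ univ.filter (fun j => i < j), g i j)
        + ∑ i, ∑ j ∈ univ.filter (fun j => i < j), g j i := by
    rw [← Finset.sum_add_distrib]
    exact Finset.sum_congr rfl fun i _ => Finset.sum_add_distrib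
  rw [e1, ← swap]
  simp_rw [split]
  rw [Finset.sum_add_distrib, Finset.sum_add_distrib]
  abel

lemma id1c {d N : ℕ} (ρ : Matrix (Fin d) (Fin d) ℂ) (A : Fin N → Matrix (Fin d) (Fin d) ℂ) :
    ∑ i, ∑ j ∈ univ.filter (fun j => i < j), cb ρ (A i + A j) (A i + A j)
      = ((N : ℂ) - 2) * (∑ i, cb ρ (A i) (A i)) + cb ρ (∑ i, A i) (∑ i, A i) := by
  have step : ∀ i j : Fin N, cb ρ (A i + A j) (A i + A j)
      = (cb ρ (A i) (A i) + cb ρ (A i) (A j)) + (cb ρ (A j) (A j) + cb ρ (A j) (A i)) := by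
    intro i j; rw [cb_add_add]; ring
  simp_rw [step]
  rw [sum_pairs (fun i j => cb ρ (A i) (A i) + cb ρ (A i) (A j)), cb_sum_sum]
  simp_rw [Finset.sum_add_distrib]
  simp only [Finset.sum_const, Finset.card_univ, Fintype.card_fin, nsmul_eq_mul]
  rw [← Finset.mul_sum]
  ring

lemma id2c {d N : ℕ} (ρ : Matrix (Fin d) (Fin d) ℂ) (A : Fin N → Matrix (Fin d) (Fin d) ℂ) :
    ∑ i, ∑ j ∈ univ.filter (fun j => i < j), cb ρ (A i - A j) (A i - A j)
      = (N : ℂ) * (∑ i, cb ρ (A i) (A i)) - cb ρ (∑ i, A i) (∑ i, A i) := by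
  have step : ∀ i j : Fin N, cb ρ (A i - A j) (A i - A j)
      = (cb ρ (A i) (A i) - cb ρ (A i) (A j)) + (cb ρ (A j) (A j) - cb ρ (A j) (A i)) := by
    intro i j; rw [cb_sub_sub]; ring
  simp_rw [step]
  rw [sum_pairs (fun i j => cb ρ (A i) (A i) - cb ρ (A i) (A j)), cb_sum_sum]
  simp_rw [Finset.sum_sub_distrib]
  simp only [sub_self, Finset.sum_const_zero, Finset.sum_const, Finset.card_univ,
    Fintype.card_fin, nsmul_eq_mul, sub_zero]
  rw [← Finset.mul_sum]

lemma id1r {d N : ℕ} (ρ : Matrix (Fin d) (Fin d) ℂ) (A : Fin N → Matrix (Fin d) (Fin d) ℂ) :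
    ∑ i, ∑ j ∈ univ.filter (fun j => i < j), qvar ρ (A i + A j)
      = ((N : ℝ) - 2) * (∑ i, qvar ρ (A i)) + qvar ρ (∑ i, A i) := by
  have h := congrArg Complex.re (id1c ρ A)
  rw [show ((N : ℂ) - 2) = ((((N : ℝ) - 2 : ℝ)) : ℂ) by push_cast; ring] at h
  simp only [Complex.re_sum, Complex.add_re, Complex.re_ofReal_mul] at h
  simp_rw [← qvar_eq_cb] at h
  exact h

lemma id2r {d N : ℕ} (ρ : Matrix (Fin d) (Fin d) ℂ) (A : Fin N → Matrix (Fin d) (Fin d) ℂ) :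
    ∑ i, ∑ j ∈ univ.filter (fun j => i < j), qvar ρ (A i - A j)
      = (N : ℝ) * (∑ i, qvar ρ (A i)) - qvar ρ (∑ i, A i) := by
  have h := congrArg Complex.re (id2c ρ A)
  rw [show ((N : ℂ)) = (((N : ℝ)) : ℂ) by push_cast; ring] at h
  simp only [Complex.re_sum, Complex.sub_re, Complex.re_ofReal_mul] at h
  simp_rw [← qvar_eq_cb] at h
  exact h

lemma psd_trace_re_nonneg {d : ℕ} {P : Matrix (Fin d) (Fin d) ℂ} (hP : P.PosSemidef) :
    0 ≤ P.trace.re := by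
  obtain ⟨B, hB⟩ : ∃ B : Matrix (Fin d) (Fin d) ℂ, P = Bᴴ * B := by
    open scoped MatrixOrder in exact CStarAlgebra.nonneg_iff_eq_star_mul_self.mp hP.nonneg
  subst hB
  have h : (0 : ℂ) ≤ (Bᴴ * B).trace := by
    rw [Matrix.trace]
    refine Finset.sum_nonneg fun i _ => ?_
    rw [Matrix.diag_apply, Matrix.mul_apply]
    refine Finset.sum_nonneg fun k _ => ?_
    rw [Matrix.conjTranspose_apply]
    exact star_mul_self_nonneg _
  exact (Complex.le_def.mp h).1

lemma qvar_nonneg {d : ℕ} {ρ : Matrix (Fin d) (Fin d) ℂ} (hρ : ρ.PosSemidef)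
    (hρ1 : ρ.trace = 1) {M : Matrix (Fin d) (Fin d) ℂ} (hM : M.IsHermitian) :
    0 ≤ qvar ρ M := by
  set c : ℂ := (ρ * M).trace with hc
  set r : ℝ := c.re with hr
  set K : Matrix (Fin d) (Fin d) ℂ := M - (r : ℂ) • 1 with hKdef
  have hK : Kᴴ = K := by
    simp [hKdef, Matrix.conjTranspose_smul, hM.eq, Complex.conj_ofReal]
  have hP : (K * ρ * Kᴴ).PosSemidef := hρ.mul_mul_conjTranspose_same K
  have htr : (K * ρ * Kᴴ).trace = (ρ * K ^ 2).trace := by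
    rw [hK, Matrix.trace_mul_cycle, Matrix.trace_mul_comm, sq]
  have hK2 : ρ * K ^ 2 = ρ * M ^ 2 - ((2 * r : ℝ) : ℂ) • (ρ * M) + (((r : ℝ) ^ 2 : ℝ) : ℂ) • ρ := by
    have : K ^ 2 = M ^ 2 - ((2 * r : ℝ) : ℂ) • M + (((r : ℝ) ^ 2 : ℝ) : ℂ) • 1 := by
      simp only [hKdef, sq, Matrix.sub_mul, Matrix.mul_sub, Matrix.smul_mul, Matrix.mul_smul,
        Matrix.mul_one, Matrix.one_mul, smul_smul]
      push_cast
      module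
    rw [this, Matrix.mul_add, Matrix.mul_sub, Matrix.mul_smul, Matrix.mul_smul, Matrix.mul_one]
  have h0 : 0 ≤ (ρ * K ^ 2).trace.re := htr ▸ psd_trace_re_nonneg hP
  rw [hK2] at h0
  simp only [Matrix.trace_add, Matrix.trace_sub, Matrix.trace_smul, hρ1, smul_eq_mul, mul_one,
    Complex.add_re, Complex.sub_re, Complex.re_ofReal_mul, Complex.ofReal_re, ← hc, ← hr] at h0
  rw [qvar]
  simp only [Complex.sub_re, ← hc]
  have hcsq : (c ^ 2).re = r ^ 2 - c.im ^ 2 := by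
    rw [sq, Complex.mul_re, ← hr]; ring
  rw [hcsq]
  nlinarith [sq_nonneg c.im, h0]

lemma sum_lt_eq_sum_pairset {N : ℕ} (f : Fin N → Fin N → ℝ) :
    ∑ i, ∑ j ∈ univ.filter (fun j => i < j), f i j
      = ∑ p ∈ (univ ×ˢ univ : Finset (Fin N × Fin N)).filter (fun p => p.1 < p.2), f p.1 p.2 := by
  rw [Finset.sum_filter, Finset.sum_product]
  simp_rw [← Finset.sum_filter]

lemma pairset_card_bound (N : ℕ) :
    2 * ((univ ×ˢ univ : Finset (Fin N × Fin N)).filter (fun p => p.1 < p.2)).card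
      ≤ N * (N - 1) := by
  classical
  set P := (univ ×ˢ univ : Finset (Fin N × Fin N)).filter (fun p => p.1 < p.2) with hP
  set Q := (univ ×ˢ univ : Finset (Fin N × Fin N)).filter (fun p => p.2 < p.1) with hQ
  have hcard : Q.card = P.card := by
    refine Finset.card_bij' (fun p _ => p.swap) (fun p _ => p.swap) ?_ ?_ ?_ ?_
    · intro p hp
      simp only [hQ, Finset.mem_filter, Finset.mem_product, Finset.mem_univ, true_and] at hp
      simp only [hP, Finset.mem_filter, Finset.mem_product, Finset.mem_univ, true_and,
        Prod.fst_swap, Prod.snd_swap]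
      exact hp
    · intro p hp
      simp only [hP, Finset.mem_filter, Finset.mem_product, Finset.mem_univ, true_and] at hp
      simp only [hQ, Finset.mem_filter, Finset.mem_product, Finset.mem_univ, true_and,
        Prod.fst_swap, Prod.snd_swap]
      exact hp
    · intro p _; exact Prod.swap_swap p
    · intro p _; exact Prod.swap_swap p
  have hdisj : Disjoint P Q := by
    rw [Finset.disjoint_left]
    intro p hp hq
    simp only [hP, hQ, Finset.mem_filter] at hp hq
    exact absurd (hp.2.trans hq.2) (lt_irrefl _)
  have hsub : P ∪ Q ⊆ (univ : Finset (Fin N)).offDiag := by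
    intro p hp
    rw [Finset.mem_union] at hp
    rw [Finset.mem_offDiag]
    rcases hp with hp | hp <;> simp only [hP, hQ, Finset.mem_filter] at hp
    · exact ⟨Finset.mem_univ _, Finset.mem_univ _, ne_of_lt hp.2⟩
    · exact ⟨Finset.mem_univ _, Finset.mem_univ _, ne_of_gt hp.2⟩
  have := (Finset.card_union_of_disjoint hdisj ▸ Finset.card_le_card hsub)
  rw [Finset.offDiag_card, Finset.card_univ, Fintype.card_fin] at this
  have hb : N * (N - 1) = N * N - N := by rw [Nat.mul_sub, mul_one]
  omega

theorem theorem2_Y {d N : ℕ} (hN : 2 ≤ N) (ρ : Matrix (Fin d) (Fin d) ℂ)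
    (hρ : ρ.PosSemidef) (hρ1 : ρ.trace = 1)
    (A : Fin N → Matrix (Fin d) (Fin d) ℂ) (hA : ∀ i, (A i).IsHermitian)
    (α β : ℝ) (hα : 0 < α) (hβ : 0 < β) :
    ∑ i, qvar ρ (A i) ≥
      (1 / (α * N + ((N : ℝ) - 2) * β)) *
        (β * (∑ i : Fin N, ∑ j ∈ univ.filter (fun j => i < j), qvar ρ (A i + A j)) +
         (2 * α / ((N : ℝ) * ((N : ℝ) - 1))) *
          (∑ i : Fin N, ∑ j ∈ univ.filter (fun j => i < j), qdev ρ (A i - A j)) ^ 2 +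
         (α - β) * qvar ρ (∑ i, A i)) := by
  have hN2 : (2 : ℝ) ≤ (N : ℝ) := by exact_mod_cast hN
  set S := ∑ i, qvar ρ (A i) with hS
  set V := qvar ρ (∑ i, A i) with hV
  have hX : (∑ i : Fin N, ∑ j ∈ univ.filter (fun j => i < j), qvar ρ (A i + A j))
      = ((N : ℝ) - 2) * S + V := id1r ρ A
  have hW : (∑ i : Fin N, ∑ j ∈ univ.filter (fun j => i < j), qvar ρ (A i - A j))
      = (N : ℝ) * S - V := id2r ρ A
  set W := ∑ i : Fin N, ∑ j ∈ univ.filter (fun j => i < j), qvar ρ (A i - A j) with hWdef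
  set T := ∑ i : Fin N, ∑ j ∈ univ.filter (fun j => i < j), qdev ρ (A i - A j) with hTdef
  have hW0 : 0 ≤ W := by
    rw [hWdef]
    exact Finset.sum_nonneg fun i _ => Finset.sum_nonneg fun j _ =>
      qvar_nonneg hρ hρ1 ((hA i).sub (hA j))
  set P := (univ ×ˢ univ : Finset (Fin N × Fin N)).filter (fun p => p.1 < p.2) with hPdef
  have hTP : T = ∑ p ∈ P, qdev ρ (A p.1 - A p.2) := by
    rw [hTdef, hPdef]; exact sum_lt_eq_sum_pairset _
  have hWP : W = ∑ p ∈ P, qvar ρ (A p.1 - A p.2) := by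
    rw [hWdef, hPdef]; exact sum_lt_eq_sum_pairset _
  have hCS : T ^ 2 ≤ (P.card : ℝ) * W := by
    rw [hTP, hWP]
    have h := Finset.sum_mul_sq_le_sq_mul_sq P (fun _ => (1 : ℝ))
      (fun p => qdev ρ (A p.1 - A p.2))
    simp only [one_mul, one_pow, Finset.sum_const, nsmul_eq_mul, mul_one] at h
    have hq : ∀ p ∈ P, qdev ρ (A p.1 - A p.2) ^ 2 = qvar ρ (A p.1 - A p.2) := fun p _ =>
      Real.sq_sqrt (qvar_nonneg hρ hρ1 ((hA p.1).sub (hA p.2)))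
    rwa [Finset.sum_congr rfl hq] at h
  have hcard : 2 * (P.card : ℝ) ≤ (N : ℝ) * ((N : ℝ) - 1) := by
    have h1 : 2 * P.card ≤ N * (N - 1) := by rw [hPdef]; exact pairset_card_bound N
    have h2 : ((2 * P.card : ℕ) : ℝ) ≤ ((N * (N - 1) : ℕ) : ℝ) := Nat.cast_le.mpr h1
    push_cast [Nat.cast_sub (show 1 ≤ N by omega)] at h2
    convert h2 using 2
  have hNN : 0 < (N : ℝ) * ((N : ℝ) - 1) := by nlinarith
  have hD : 0 < α * N + ((N : ℝ) - 2) * β := by nlinarith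
  have ht : 2 * α / ((N : ℝ) * ((N : ℝ) - 1)) * T ^ 2 ≤ α * W := by
    rw [div_mul_eq_mul_div, div_le_iff₀ hNN]
    nlinarith [mul_le_mul_of_nonneg_left hCS hα.le,
      mul_le_mul_of_nonneg_right hcard (mul_nonneg hα.le hW0)]
  rw [ge_iff_le, hX]
  have hsum : β * (((N : ℝ) - 2) * S + V) + 2 * α / ((N : ℝ) * ((N : ℝ) - 1)) * T ^ 2
      + (α - β) * V ≤ (α * N + ((N : ℝ) - 2) * β) * S := by
    have he : β * (((N : ℝ) - 2) * S + V) + α * W + (α - β) * V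
        = (α * N + ((N : ℝ) - 2) * β) * S := by
      rw [hW]; ring
    linarith [ht]
  calc 1 / (α * N + ((N : ℝ) - 2) * β) *
        (β * (((N : ℝ) - 2) * S + V) + 2 * α / ((N : ℝ) * ((N : ℝ) - 1)) * T ^ 2 + (α - β) * V)
      ≤ 1 / (α * N + ((N : ℝ) - 2) * β) * ((α * N + ((N : ℝ) - 2) * β) * S) := by
        exact mul_le_mul_of_nonneg_left hsum (by positivity)
    _ = S := by field_simp
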